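/- With 𝒜, K ≤ 𝒜^s, ℓ = |supp(K)|, γ as above and r ≥ γℓ: |B̂^av(r)| = |B^{s−ℓ}(r − γℓ)| · |𝒜|^ℓ / |K|, where B^k(ρ) = { z ∈ 𝒜^k : w(z) ≤ ρ } is the homogeneous-weight ball of radius ρ in 𝒜^k and B̂^av(r) is the set of cosets of K in 𝒜^s whose average homogeneous weight is at most r. -/
import Mathlib


open Finset MulOpposite
open scoped Classical BigOperators

/-- for `r ≥ γℓ`,
`|B̂^av(r)| = |B^{s−ℓ}(r − γℓ)|·|𝒜|^ℓ/|K|`, where `B̂^av(r)` is the set of cosets of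
`K` in `𝒜^s` of average homogeneous weight at most `r` and `B^k(ρ)` is the
homogeneous-weight ball of radius `ρ` in `𝒜^k`. -/
theorem stmt13 {R A : Type*} [Ring R] [Fintype R] [DecidableEq R]
    [AddCommGroup A] [Module R A] [Module Rᵐᵒᵖ A] [SMulCommClass R Rᵐᵒᵖ A] [Fintype A]
    (χ : AddChar A ℂ)
    (hgenL : ∀ N : Submodule R A, (∀ x ∈ N, χ x = 1) → N = ⊥)
    (hgenR : ∀ N : Submodule Rᵐᵒᵖ A, (∀ x ∈ N, χ x = 1) → N = ⊥)
    (hcard : Fintype.card A = Fintype.card R)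
    (γ : ℝ) (w : A → ℝ)
    (hw : ∀ a : A, (w a : ℂ) =
      (γ : ℂ) * (1 - (Fintype.card Rˣ : ℂ)⁻¹ * ∑ u : Rˣ, χ (op (u : R) • a)))
    (s ℓ : ℕ) (K : Submodule R (Fin s → A))
    (hKright : ∀ (r : R), ∀ z ∈ K, (op r • z : Fin s → A) ∈ K)
    (hℓ : (univ.filter fun i : Fin s => ∃ z ∈ K, z i ≠ 0).card = ℓ)
    (hls : ℓ ≤ s) (r : ℝ) (hr : γ * ℓ ≤ r) :
    (Nat.card {q : (Fin s → A) ⧸ K //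
        ∃ z : Fin s → A, (Submodule.Quotient.mk z : (Fin s → A) ⧸ K) = q ∧
          (Nat.card K : ℝ)⁻¹ * ∑ k : K, ∑ i, w (z i + (k : Fin s → A) i) ≤ r} : ℝ) =
      (Nat.card {z : Fin (s - ℓ) → A // ∑ i, w (z i) ≤ r - γ * ℓ} : ℝ) *
        (Fintype.card A : ℝ) ^ ℓ / (Nat.card K : ℝ) := by
  set S : Finset (Fin s) := univ.filter fun i : Fin s => ∃ z ∈ K, z i ≠ 0 with hS
  -- coordinates outside the support vanish on K
  have h0 : ∀ i ∉ S, ∀ k : K, (k : Fin s → A) i = 0 := by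
    intro i hi k
    by_contra h
    exact hi (Finset.mem_filter.2 ⟨Finset.mem_univ i, ⟨k, k.2, h⟩⟩)
  -- the character sums vanish on support coordinates
  have hchar : ∀ i ∈ S, ∀ u : Rˣ,
      ∑ k : K, χ (op (u : R) • (k : Fin s → A) i) = 0 := by
    intro i hi u
    have hi' : ∃ z ∈ K, z i ≠ 0 := (Finset.mem_filter.1 hi).2
    set f : K →+ A :=
      { toFun := fun k => op (u : R) • (k : Fin s → A) i
        map_zero' := by simp
        map_add' := by intro a b; simp [smul_add] }
    have hne : χ.compAddMonoidHom f ≠ 0 := by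
      intro h0'
      have htriv : ∀ k : K, χ (op (u : R) • (k : Fin s → A) i) = 1 := by
        intro k
        have := DFunLike.congr_fun h0' k
        simpa [f] using this
      set g : A →ₗ[R] A :=
        { toFun := fun x => op (u : R) • x
          map_add' := fun x y => smul_add _ _ _
          map_smul' := fun c x => (smul_comm c (op (u : R)) x).symm }
      have hbot : (K.map (LinearMap.proj i)).map g = ⊥ := by
        apply hgenL
        rintro x hx
        rcases Submodule.mem_map.1 hx with ⟨y, hy, rfl⟩
        rcases Submodule.mem_map.1 hy with ⟨z, hz, rfl⟩
        simpa [g, LinearMap.proj] using htriv ⟨z, hz⟩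
      rcases hi' with ⟨z, hzK, hzi⟩
      apply hzi
      have hmem : g (z i) ∈ (K.map (LinearMap.proj i)).map g :=
        Submodule.mem_map_of_mem (Submodule.mem_map_of_mem hzK)
      rw [hbot, Submodule.mem_bot] at hmem
      have hzz : op ((u⁻¹ : Rˣ) : R) • (op (u : R) • z i) = z i := by
        rw [← mul_smul, ← op_mul]; simp
      rw [← hzz]
      simp only [g, LinearMap.coe_mk, AddHom.coe_mk] at hmem
      rw [hmem, smul_zero]
    have := AddChar.sum_eq_zero_iff_ne_zero.2 hne
    simpa [f] using this
  -- the average weight of a coset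
  have hsum : ∀ z : Fin s → A,
      ∑ k : K, ∑ i, w (z i + (k : Fin s → A) i)
        = (Nat.card K : ℝ) * (∑ i ∈ Sᶜ, w (z i) + γ * ℓ) := by
    intro z
    apply Complex.ofReal_injective
    push_cast
    rw [Finset.sum_comm, ← Finset.sum_add_sum_compl S]
    have hA : ∑ i ∈ S, ∑ k : K, (w (z i + (k : Fin s → A) i) : ℂ)
        = (S.card : ℂ) * ((Fintype.card K : ℂ) * γ) := by
      rw [Finset.sum_congr rfl (fun i hi => ?_), Finset.sum_const, nsmul_eq_mul]
      have h1 : ∀ k : K, (w (z i + (k : Fin s → A) i) : ℂ)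
          = (γ : ℂ) - ((γ : ℂ) * (Fintype.card Rˣ : ℂ)⁻¹) *
              ∑ u : Rˣ, χ (op (u : R) • z i) * χ (op (u : R) • (k : Fin s → A) i) := by
        intro k
        rw [hw]
        have h2 : ∀ u : Rˣ, χ (op (u : R) • (z i + (k : Fin s → A) i))
            = χ (op (u : R) • z i) * χ (op (u : R) • (k : Fin s → A) i) := by
          intro u; rw [smul_add, AddChar.map_add_eq_mul]
        simp_rw [h2]
        ring
      simp_rw [h1]
      rw [Finset.sum_sub_distrib, Finset.sum_const, ← Finset.mul_sum, Finset.sum_comm]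
      simp_rw [← Finset.mul_sum]
      simp [hchar i hi, nsmul_eq_mul, card_univ]
    have hB : ∑ i ∈ Sᶜ, ∑ k : K, (w (z i + (k : Fin s → A) i) : ℂ)
        = (Fintype.card K : ℂ) * ∑ i ∈ Sᶜ, (w (z i) : ℂ) := by
      rw [Finset.mul_sum]
      refine Finset.sum_congr rfl fun i hi => ?_
      have hzz : ∀ k : K, z i + (k : Fin s → A) i = z i := by
        intro k; rw [h0 i (Finset.mem_compl.1 hi) k, add_zero]
      simp [hzz, card_univ]
    rw [hA, hB, hℓ, Nat.card_eq_fintype_card]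
    ring
  have hK0 : (0 : ℝ) < (Nat.card K : ℝ) := by
    exact_mod_cast Nat.card_pos
  -- the condition in terms of the complement of the support
  have hcond : ∀ z : Fin s → A,
      ((Nat.card K : ℝ)⁻¹ * ∑ k : K, ∑ i, w (z i + (k : Fin s → A) i) ≤ r)
        ↔ ∑ i ∈ Sᶜ, w (z i) ≤ r - γ * ℓ := by
    intro z
    rw [hsum z, inv_mul_cancel_left₀ hK0.ne']
    exact le_sub_iff_add_le.symm
  -- finiteness of the quotient
  haveI : Fintype ((Fin s → A) ⧸ K) := Fintype.ofFinite _
  set P : (Fin s → A) → Prop := fun z => ∑ i ∈ Sᶜ, w (z i) ≤ r - γ * ℓ with hP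
  set pred : ((Fin s → A) ⧸ K) → Prop := fun q =>
    ∃ z : Fin s → A, (Submodule.Quotient.mk z : (Fin s → A) ⧸ K) = q ∧
      (Nat.card K : ℝ)⁻¹ * ∑ k : K, ∑ i, w (z i + (k : Fin s → A) i) ≤ r with hpred
  set T : Finset (Fin s → A) := univ.filter P with hT
  set Q : Finset ((Fin s → A) ⧸ K) := univ.filter pred with hQ
  -- counting: T.card = Q.card * |K|
  have claimB : T.card = Q.card * Fintype.card K := by
    rw [Finset.card_eq_sum_card_fiberwise
      (f := fun z => (Submodule.Quotient.mk z : (Fin s → A) ⧸ K)) (t := Q)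
      (fun z hz => by
        refine Finset.mem_filter.2 ⟨Finset.mem_univ _, ⟨z, rfl, ?_⟩⟩
        exact (hcond z).2 (Finset.mem_filter.1 hz).2)]
    rw [Finset.sum_congr rfl (fun q hq => ?_), Finset.sum_const, smul_eq_mul]
    obtain ⟨z₀, hz₀q, hz₀⟩ := (Finset.mem_filter.1 hq).2
    have hPz₀ : P z₀ := (hcond z₀).1 hz₀
    rw [← Finset.card_univ (α := K)]
    symm
    apply Finset.card_bij (fun (k : K) _ => z₀ + (k : Fin s → A))
    · intro k _
      refine Finset.mem_filter.2 ⟨Finset.mem_filter.2 ⟨Finset.mem_univ _, ?_⟩, ?_⟩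
      · show P _
        have : ∑ i ∈ Sᶜ, w (z₀ i + (k : Fin s → A) i) = ∑ i ∈ Sᶜ, w (z₀ i) :=
          Finset.sum_congr rfl fun i hi => by
            rw [h0 i (Finset.mem_compl.1 hi) k, add_zero]
        simpa [P, this] using hPz₀
      · rw [← hz₀q, Submodule.Quotient.eq]
        simpa using k.2
    · intro a _ b _ h
      exact Subtype.ext (by simpa using add_left_cancel h)
    · intro z hz
      obtain ⟨hzT, hzq⟩ := Finset.mem_filter.1 hz
      rw [← hz₀q, Submodule.Quotient.eq] at hzq
      exact ⟨⟨z - z₀, hzq⟩, Finset.mem_univ _, by simp⟩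
  -- counting: T.card = B'.card * |A|^ℓ
  set B' : Finset ({x // x ∈ Sᶜ} → A) :=
    univ.filter (fun v => ∑ i, w (v i) ≤ r - γ * ℓ) with hB'
  have claimC : T.card = B'.card * Fintype.card A ^ ℓ := by
    rw [Finset.card_eq_sum_card_fiberwise
      (f := fun (z : Fin s → A) (i : {x // x ∈ Sᶜ}) => z i.1) (t := B')
      (fun z hz => by
        refine Finset.mem_filter.2 ⟨Finset.mem_univ _, ?_⟩
        have := (Finset.mem_filter.1 hz).2
        simpa [P, ← Finset.sum_coe_sort Sᶜ (fun i => w (z i))] using this)]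
    rw [Finset.sum_congr rfl (fun v hv => ?_), Finset.sum_const, smul_eq_mul]
    have hvB : ∑ i : {x // x ∈ Sᶜ}, w (v i) ≤ r - γ * ℓ := (Finset.mem_filter.1 hv).2
    have hcardSA : Fintype.card ({x // x ∈ S} → A) = Fintype.card A ^ ℓ := by
      rw [Fintype.card_fun, Fintype.card_coe, hℓ]
    rw [← hcardSA, ← Finset.card_univ (α := ({x // x ∈ S} → A))]
    symm
    apply Finset.card_bij (fun (g : {x // x ∈ S} → A) _ =>
      fun j : Fin s => if h : j ∈ S then g ⟨j, h⟩ else v ⟨j, Finset.mem_compl.2 h⟩)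
    · intro g _
      refine Finset.mem_filter.2 ⟨Finset.mem_filter.2 ⟨Finset.mem_univ _, ?_⟩, ?_⟩
      · show P _
        have hsum' : ∑ i ∈ Sᶜ,
            w (if h : i ∈ S then g ⟨i, h⟩ else v ⟨i, Finset.mem_compl.2 h⟩)
            = ∑ i : {x // x ∈ Sᶜ}, w (v i) := by
          rw [← Finset.sum_coe_sort Sᶜ]
          refine Finset.sum_congr rfl fun i _ => ?_
          rw [dif_neg (Finset.mem_compl.1 i.2)]
        simpa [P, hsum'] using hvB
      · funext i
        have hni : ↑i ∉ S := Finset.mem_compl.1 i.2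
        simp only [dif_neg hni]
    · intro a _ b _ h
      funext j
      have h2 := congr_fun h j.1
      simp only [dif_pos j.2] at h2
      simpa using h2
    · intro z hz
      obtain ⟨hzT, hzv⟩ := Finset.mem_filter.1 hz
      refine ⟨fun j => z j.1, Finset.mem_univ _, ?_⟩
      funext i
      by_cases h : i ∈ S
      · simp only [dif_pos h]
      · simp only [dif_neg h, ← hzv]
  -- identify B'.card with the ball in A^{s-ℓ}
  have hSc : Fintype.card {x // x ∈ Sᶜ} = s - ℓ := by
    rw [Fintype.card_coe, Finset.card_compl, hℓ, Fintype.card_fin]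
  have e2 : {x // x ∈ Sᶜ} ≃ Fin (s - ℓ) :=
    Fintype.equivFinOfCardEq hSc
  have claimD : B'.card = Nat.card {z : Fin (s - ℓ) → A // ∑ i, w (z i) ≤ r - γ * ℓ} := by
    rw [Nat.card_eq_fintype_card, ← Fintype.card_subtype]
    apply Fintype.card_congr
    refine Equiv.subtypeEquiv (Equiv.arrowCongr e2 (Equiv.refl A)) fun v => ?_
    have : ∑ j : Fin (s - ℓ), w (v (e2.symm j)) = ∑ i : {x // x ∈ Sᶜ}, w (v i) :=
      Fintype.sum_equiv e2.symm _ _ fun j => rfl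
    simp [Equiv.arrowCongr, this]
  -- final arithmetic
  have hLHS : Nat.card {q : (Fin s → A) ⧸ K // pred q} = Q.card := by
    rw [Nat.card_eq_fintype_card, Fintype.card_subtype]
  have hnat : Q.card * Fintype.card K
      = Nat.card {z : Fin (s - ℓ) → A // ∑ i, w (z i) ≤ r - γ * ℓ} * Fintype.card A ^ ℓ := by
    rw [← claimB, claimC, claimD]
  show (Nat.card {q : (Fin s → A) ⧸ K // pred q} : ℝ) = _
  rw [hLHS, eq_div_iff hK0.ne', Nat.card_eq_fintype_card (α := K)]
  exact_mod_cast hnat
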